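/- Let H be a complex Hilbert space with fundamental symmetry J and Krein inner product [x,y] = ⟨Jx,y⟩. Let T be a bounded operator with Krein adjoint T^[*] = JT*J. If λ > 0 is a spectral point of positive type of TT^[*] (every sequence of unit vectors x_n with (TT^[*] − λ)x_n → 0 satisfies liminf [x_n,x_n] > 0), then λ is a spectral point of positive type of T^[*]T. -/

import Mathlib

open Filter Topology

/-- `λ` is a spectral point of positive type of the operator `S` on the Krein space
`(H, [·,·])` with `[x,y] = ⟨Jx,y⟩`: `λ ∈ σ_ap(S)` and every approximate eigensequence
of unit vectors satisfies `liminf [xₙ,xₙ] > 0`. -/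
def IsSpectralPointOfPositiveType {H : Type*} [NormedAddCommGroup H]
    [InnerProductSpace ℂ H] [CompleteSpace H] (J S : H →L[ℂ] H) (l : ℝ) : Prop :=
  (∃ x : ℕ → H, (∀ n, ‖x n‖ = 1) ∧
      Tendsto (fun n => S (x n) - (l : ℂ) • x n) atTop (𝓝 0)) ∧
  ∀ x : ℕ → H, (∀ n, ‖x n‖ = 1) →
    Tendsto (fun n => S (x n) - (l : ℂ) • x n) atTop (𝓝 0) →
    0 < Filter.liminf (fun n => (inner ℂ (J (x n)) (x n) : ℂ).re) atTop

section Aux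

variable {H : Type*} [NormedAddCommGroup H] [InnerProductSpace ℂ H] [CompleteSpace H]

/-- Transfer an approximate eigensequence of `P` to one of `Q` along an intertwiner `C`. -/
lemma transfer_seq (P Q C : H →L[ℂ] H) (hcomm : C.comp P = Q.comp C)
    (l : ℝ) (hl : 0 < l) (M : ℝ) (hbound : ∀ y, ‖P y‖ ≤ M * ‖C y‖)
    (x : ℕ → H) (hx : ∀ n, ‖x n‖ = 1)
    (hconv : Tendsto (fun n => P (x n) - (l : ℂ) • x n) atTop (𝓝 0)) :
    ∃ (N : ℕ) (z : ℕ → H), (∀ n, ‖z n‖ = 1) ∧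
      Tendsto (fun n => Q (z n) - (l : ℂ) • z n) atTop (𝓝 0) ∧
      ∀ n ≥ N, z n = ((‖C (x n)‖ : ℂ))⁻¹ • C (x n) ∧ l / (2 * M) ≤ ‖C (x n)‖ := by
  have hnorm : Tendsto (fun n => ‖P (x n) - (l : ℂ) • x n‖) atTop (𝓝 0) := by
    simpa using hconv.norm
  have hev : ∀ᶠ n in atTop, ‖P (x n) - (l : ℂ) • x n‖ < l / 2 :=
    hnorm.eventually_lt_const (by linarith)
  obtain ⟨N, hN⟩ := eventually_atTop.mp hev
  have hPlow : ∀ n ≥ N, l / 2 ≤ ‖P (x n)‖ := by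
    intro n hn
    have h1 : ‖(l : ℂ) • x n‖ = l := by
      rw [norm_smul, hx n]
      simp [abs_of_pos hl]
    have h2 : ‖(l : ℂ) • x n‖ - ‖P (x n)‖ ≤ ‖P (x n) - (l : ℂ) • x n‖ := by
      have := norm_sub_norm_le ((l : ℂ) • x n) (P (x n))
      have h3 : ‖(l : ℂ) • x n - P (x n)‖ = ‖P (x n) - (l : ℂ) • x n‖ := norm_sub_rev _ _
      linarith
    have := hN n hn
    linarith
  have hMpos : 0 < M := by
    have h1 := hPlow N le_rfl
    have h2 := hbound (x N)
    nlinarith [norm_nonneg (C (x N))]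
  have hc : 0 < l / (2 * M) := by positivity
  have hClow : ∀ n ≥ N, l / (2 * M) ≤ ‖C (x n)‖ := by
    intro n hn
    have h1 := hPlow n hn
    have h2 := hbound (x n)
    rw [div_le_iff₀ (by positivity), mul_comm]
    nlinarith
  refine ⟨N, fun n => ((‖C (x (max n N))‖ : ℂ))⁻¹ • C (x (max n N)), ?_, ?_, ?_⟩
  · intro n
    have hge : l / (2 * M) ≤ ‖C (x (max n N))‖ := hClow _ (le_max_right n N)
    have hpos : 0 < ‖C (x (max n N))‖ := lt_of_lt_of_le hc hge
    rw [norm_smul]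
    simp [abs_of_pos hpos, inv_mul_cancel₀ (ne_of_gt hpos)]
  · have hmax : Tendsto (fun n => max n N) atTop atTop :=
      tendsto_atTop_mono (fun n => le_max_left n N) tendsto_id
    apply squeeze_zero_norm (a := fun n =>
      (l / (2 * M))⁻¹ * (‖C‖ * ‖P (x (max n N)) - (l : ℂ) • x (max n N)‖))
    · intro n
      set m := max n N with hm
      have hge : l / (2 * M) ≤ ‖C (x m)‖ := hClow _ (le_max_right n N)
      have hpos : 0 < ‖C (x m)‖ := lt_of_lt_of_le hc hge
      have hQC : Q (C (x m)) = C (P (x m)) := by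
        have := congrArg (fun (S : H →L[ℂ] H) => S (x m)) hcomm
        simpa using this.symm
      have key : Q (((‖C (x m)‖ : ℂ))⁻¹ • C (x m)) - (l : ℂ) • ((‖C (x m)‖ : ℂ))⁻¹ • C (x m)
          = ((‖C (x m)‖ : ℂ))⁻¹ • C (P (x m) - (l : ℂ) • x m) := by
        rw [map_smul, hQC, map_sub, map_smul]
        rw [smul_sub, smul_comm]
      rw [key, norm_smul]
      have h1 : ‖((‖C (x m)‖ : ℂ))⁻¹‖ = ‖C (x m)‖⁻¹ := by
        simp [abs_of_pos hpos]
      rw [h1]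
      have h2 : ‖C (P (x m) - (l : ℂ) • x m)‖ ≤ ‖C‖ * ‖P (x m) - (l : ℂ) • x m‖ :=
        C.le_opNorm _
      have h3 : ‖C (x m)‖⁻¹ ≤ (l / (2 * M))⁻¹ := by
        exact inv_anti₀ hc hge
      have h4 : (0:ℝ) ≤ ‖C (x m)‖⁻¹ := by positivity
      calc ‖C (x m)‖⁻¹ * ‖C (P (x m) - (l : ℂ) • x m)‖
          ≤ ‖C (x m)‖⁻¹ * (‖C‖ * ‖P (x m) - (l : ℂ) • x m‖) := by
            exact mul_le_mul_of_nonneg_left h2 h4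
        _ ≤ (l / (2 * M))⁻¹ * (‖C‖ * ‖P (x m) - (l : ℂ) • x m‖) := by
            apply mul_le_mul_of_nonneg_right h3
            positivity
    · have : Tendsto (fun n => ‖P (x (max n N)) - (l : ℂ) • x (max n N)‖) atTop (𝓝 0) :=
        hnorm.comp hmax
      have := this.const_mul ‖C‖
      rw [mul_zero] at this
      have := this.const_mul (l / (2 * M))⁻¹
      rw [mul_zero] at this
      simpa [mul_assoc] using this
  · intro n hn
    refine ⟨?_, hClow n hn⟩
    simp [max_eq_left hn]


lemma krein_bound (J : H →L[ℂ] H) (hJnorm : ∀ v, ‖J v‖ = ‖v‖) (v : H) (hv : ‖v‖ = 1) :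
    |(inner ℂ (J v) v : ℂ).re| ≤ 1 := by
  calc |(inner ℂ (J v) v : ℂ).re| ≤ ‖(inner ℂ (J v) v : ℂ)‖ := Complex.abs_re_le_norm _
    _ = ‖(inner ℂ (J v) v : ℂ)‖ := rfl
    _ ≤ ‖J v‖ * ‖v‖ := norm_inner_le_norm _ _
    _ = 1 := by rw [hJnorm, hv]; ring

set_option maxHeartbeats 1000000 in
theorem stmt17_main (J : H →L[ℂ] H) (hJsa : ContinuousLinearMap.adjoint J = J)
    (hJ2 : J.comp J = 1) (T : H →L[ℂ] H) (l : ℝ) (hl : 0 < l)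
    (h : (∃ x : ℕ → H, (∀ n, ‖x n‖ = 1) ∧
      Tendsto (fun n => (T.comp (J.comp ((ContinuousLinearMap.adjoint T).comp J))) (x n)
        - (l : ℂ) • x n) atTop (𝓝 0)) ∧
      ∀ x : ℕ → H, (∀ n, ‖x n‖ = 1) →
        Tendsto (fun n => (T.comp (J.comp ((ContinuousLinearMap.adjoint T).comp J))) (x n)
          - (l : ℂ) • x n) atTop (𝓝 0) →
        0 < Filter.liminf (fun n => (inner ℂ (J (x n)) (x n) : ℂ).re) atTop) :
    (∃ x : ℕ → H, (∀ n, ‖x n‖ = 1) ∧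
      Tendsto (fun n => ((J.comp ((ContinuousLinearMap.adjoint T).comp J)).comp T) (x n)
        - (l : ℂ) • x n) atTop (𝓝 0)) ∧
      ∀ x : ℕ → H, (∀ n, ‖x n‖ = 1) →
        Tendsto (fun n => ((J.comp ((ContinuousLinearMap.adjoint T).comp J)).comp T) (x n)
          - (l : ℂ) • x n) atTop (𝓝 0) →
        0 < Filter.liminf (fun n => (inner ℂ (J (x n)) (x n) : ℂ).re) atTop := by
  set Tk : H →L[ℂ] H := J.comp ((ContinuousLinearMap.adjoint T).comp J) with hTkdef
  have hJJ : ∀ v, J (J v) = v := by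
    intro v
    have := congrArg (fun (S : H →L[ℂ] H) => S v) hJ2
    simpa using this
  have hJnorm : ∀ v, ‖J v‖ = ‖v‖ := by
    intro v
    have h1 : (inner ℂ (J v) (J v) : ℂ) = inner ℂ v v := by
      calc (inner ℂ (J v) (J v) : ℂ) = inner ℂ ((ContinuousLinearMap.adjoint J) v) (J v) := by
            rw [hJsa]
        _ = inner ℂ v (J (J v)) := ContinuousLinearMap.adjoint_inner_left J (J v) v
        _ = inner ℂ v v := by rw [hJJ]
    have h2 : ‖J v‖ ^ 2 = ‖v‖ ^ 2 := by
      have hA := inner_self_eq_norm_sq (𝕜 := ℂ) (J v)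
      have hB := inner_self_eq_norm_sq (𝕜 := ℂ) v
      rw [← hA, ← hB, h1]
    nlinarith [norm_nonneg (J v), norm_nonneg v]
  have hTadj : ‖ContinuousLinearMap.adjoint T‖ = ‖T‖ :=
    (ContinuousLinearMap.adjoint : (H →L[ℂ] H) ≃ₗᵢ⋆[ℂ] (H →L[ℂ] H)).norm_map T
  have hTk_bound : ∀ y, ‖Tk y‖ ≤ ‖T‖ * ‖y‖ := by
    intro y
    have : Tk y = J ((ContinuousLinearMap.adjoint T) (J y)) := rfl
    rw [this, hJnorm]
    calc ‖(ContinuousLinearMap.adjoint T) (J y)‖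
        ≤ ‖ContinuousLinearMap.adjoint T‖ * ‖J y‖ := (ContinuousLinearMap.adjoint T).le_opNorm _
      _ = ‖T‖ * ‖y‖ := by rw [hTadj, hJnorm]
  have hboundA : ∀ y, ‖(T.comp Tk) y‖ ≤ ‖T‖ * ‖Tk y‖ := fun y => T.le_opNorm _
  have hboundB : ∀ y, ‖(Tk.comp T) y‖ ≤ ‖T‖ * ‖T y‖ := fun y => hTk_bound (T y)
  have hcomm1 : Tk.comp (T.comp Tk) = (Tk.comp T).comp Tk := by
    ext v; rfl
  have hcomm2 : T.comp (Tk.comp T) = (T.comp Tk).comp T := by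
    ext v; rfl
  have hkey : ∀ v, (inner ℂ (J ((Tk.comp T) v)) v : ℂ) = inner ℂ (J (T v)) (T v) := by
    intro v
    have h1 : J ((Tk.comp T) v) = (ContinuousLinearMap.adjoint T) (J (T v)) := by
      show J (J ((ContinuousLinearMap.adjoint T) (J (T v))))
        = (ContinuousLinearMap.adjoint T) (J (T v))
      rw [hJJ]
    rw [h1]
    exact ContinuousLinearMap.adjoint_inner_left T v (J (T v))
  constructor
  · -- existence of approximate eigensequence
    obtain ⟨y, hy1, hy2⟩ := h.1
    obtain ⟨N, z, hz1, hz2, -⟩ := transfer_seq (T.comp Tk) (Tk.comp T) Tk hcomm1 l hl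
      ‖T‖ hboundA y hy1 hy2
    exact ⟨z, hz1, hz2⟩
  · -- positivity
    intro x hx1 hx2
    obtain ⟨N, z, hz1, hz2, hzN⟩ := transfer_seq (Tk.comp T) (T.comp Tk) T hcomm2 l hl
      ‖T‖ hboundB x hx1 hx2
    have hd : 0 < liminf (fun n => (inner ℂ (J (z n)) (z n) : ℂ).re) atTop := h.2 z hz1 hz2
    set d := liminf (fun n => (inner ℂ (J (z n)) (z n) : ℂ).re) atTop with hdd
    clear_value d
    -- T ≠ 0
    have hTpos : 0 < ‖T‖ := by
      rcases eq_or_ne T 0 with rfl | hne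
      · exfalso
        have h0 : ∀ n, ((Tk.comp (0 : H →L[ℂ] H)) (x n) - (l : ℂ) • x n) = -((l : ℂ) • x n) := by
          intro n; simp
        have h1 : Tendsto (fun _ : ℕ => l) atTop (𝓝 0) := by
          have := hx2.norm
          rw [norm_zero] at this
          have heq : (fun n => ‖(Tk.comp (0 : H →L[ℂ] H)) (x n) - (l : ℂ) • x n‖)
              = fun _ => l := by
            funext n
            rw [h0 n, norm_neg, norm_smul, hx1 n]
            simp [abs_of_pos hl]
          rwa [heq] at this
        have := tendsto_nhds_unique h1 tendsto_const_nhds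
        linarith
      · exact norm_pos_iff.mpr hne
    set c := l / (2 * ‖T‖) with hcdef
    have hcpos : 0 < c := by rw [hcdef]; positivity
    clear_value c
    -- bounded below: liminf machinery
    have hbb : IsBoundedUnder (· ≥ ·) atTop (fun n => (inner ℂ (J (z n)) (z n) : ℂ).re) :=
      isBoundedUnder_of ⟨-1, fun n => neg_le_of_abs_le (krein_bound J hJnorm (z n) (hz1 n))⟩
    have hev1 : ∀ᶠ n in atTop, d / 2 < (inner ℂ (J (z n)) (z n) : ℂ).re :=
      eventually_lt_of_lt_liminf (by linarith) hbb
    -- the error term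
    set e : ℕ → ℝ :=
      fun n => (inner ℂ (J ((Tk.comp T) (x n) - (l : ℂ) • x n)) (x n) : ℂ).re with hedef
    have he0 : Tendsto e atTop (𝓝 0) := by
      apply squeeze_zero_norm (a := fun n => ‖(Tk.comp T) (x n) - (l : ℂ) • x n‖)
      · intro n
        rw [Real.norm_eq_abs]
        calc |e n| ≤ ‖(inner ℂ (J ((Tk.comp T) (x n) - (l : ℂ) • x n)) (x n) : ℂ)‖ :=
              Complex.abs_re_le_norm _
          _ = ‖(inner ℂ (J ((Tk.comp T) (x n) - (l : ℂ) • x n)) (x n) : ℂ)‖ :=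
              rfl
          _ ≤ ‖J ((Tk.comp T) (x n) - (l : ℂ) • x n)‖ * ‖x n‖ := norm_inner_le_norm _ _
          _ = ‖(Tk.comp T) (x n) - (l : ℂ) • x n‖ := by rw [hJnorm, hx1 n]; ring
      · have := hx2.norm
        rwa [norm_zero] at this
    have hsplit : ∀ n, e n = (inner ℂ (J (T (x n))) (T (x n)) : ℂ).re
        - l * (inner ℂ (J (x n)) (x n) : ℂ).re := by
      intro n
      have h1 : (inner ℂ (J ((Tk.comp T) (x n) - (l : ℂ) • x n)) (x n) : ℂ)
          = inner ℂ (J ((Tk.comp T) (x n))) (x n) - (l : ℂ) * inner ℂ (J (x n)) (x n) := by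
        rw [map_sub, map_smul, inner_sub_left, inner_smul_left, Complex.conj_ofReal]
      rw [hedef]
      simp only [h1, hkey (x n), Complex.sub_re]
      congr 1
      simp [Complex.mul_re]
    have heabs : Tendsto (fun n => |e n|) atTop (𝓝 0) := by
      have := he0.abs
      rwa [abs_zero] at this
    clear_value e
    have hev2 : ∀ᶠ n in atTop, |e n| < c ^ 2 * d / 4 := by
      apply heabs.eventually_lt_const
      positivity
    have hev3 : ∀ᶠ n in atTop, N ≤ n := eventually_ge_atTop N
    have hevfinal : ∀ᶠ n in atTop,
        c ^ 2 * d / 4 / l ≤ (inner ℂ (J (x n)) (x n) : ℂ).re := by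
      filter_upwards [hev1, hev2, hev3] with n h1 h2 h3
      obtain ⟨hzn, hcn⟩ := hzN n h3
      have hr : (0:ℝ) < ‖T (x n)‖ := lt_of_lt_of_le hcpos hcn
      have hrne : ‖T (x n)‖ ≠ 0 := ne_of_gt hr
      have hz_inner : (inner ℂ (J (z n)) (z n) : ℂ)
          = ((‖T (x n)‖⁻¹ * ‖T (x n)‖⁻¹ : ℝ) : ℂ) * inner ℂ (J (T (x n))) (T (x n)) := by
        rw [hzn, map_smul, inner_smul_left, inner_smul_right, ← Complex.ofReal_inv,
          Complex.conj_ofReal, ← mul_assoc, ← Complex.ofReal_mul]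
      have hz_re : (inner ℂ (J (z n)) (z n) : ℂ).re
          = (‖T (x n)‖ ^ 2)⁻¹ * (inner ℂ (J (T (x n))) (T (x n)) : ℂ).re := by
        rw [hz_inner, Complex.re_ofReal_mul]
        congr 1
        rw [pow_two, mul_inv]
      have hTx_re : (inner ℂ (J (T (x n))) (T (x n)) : ℂ).re
          = ‖T (x n)‖ ^ 2 * (inner ℂ (J (z n)) (z n) : ℂ).re := by
        rw [hz_re, mul_inv_cancel_left₀ (pow_ne_zero 2 hrne)]
      have hlow : c ^ 2 * (d / 2) ≤ (inner ℂ (J (T (x n))) (T (x n)) : ℂ).re := by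
        rw [hTx_re]
        have h5 : c ^ 2 ≤ ‖T (x n)‖ ^ 2 := by nlinarith
        nlinarith
      have hsp := hsplit n
      have habs := abs_lt.mp h2
      rw [div_le_iff₀ hl]
      have e2 : (inner ℂ (J (x n)) (x n) : ℂ).re * l
          = l * (inner ℂ (J (x n)) (x n) : ℂ).re := mul_comm _ _
      linarith [hlow, habs.2, hsp, e2]
    have hub : IsBoundedUnder (· ≤ ·) atTop (fun n => (inner ℂ (J (x n)) (x n) : ℂ).re) :=
      isBoundedUnder_of ⟨1, fun n => le_of_abs_le (krein_bound J hJnorm (x n) (hx1 n))⟩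
    have hcb : IsCoboundedUnder (· ≥ ·) atTop (fun n => (inner ℂ (J (x n)) (x n) : ℂ).re) :=
      hub.isCoboundedUnder_ge
    have hfin : c ^ 2 * d / 4 / l
        ≤ liminf (fun n => (inner ℂ (J (x n)) (x n) : ℂ).re) atTop :=
      le_liminf_of_le hcb hevfinal
    have : 0 < c ^ 2 * d / 4 / l := by positivity
    linarith

end Aux

/-- If `λ > 0` is a spectral point of positive type of `TT^[*]`, then `λ`
is a spectral point of positive type of `T^[*]T`. -/
theorem stmt17 {H : Type*} [NormedAddCommGroup H] [InnerProductSpace ℂ H] [CompleteSpace H]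
    (J : H →L[ℂ] H) (hJsa : ContinuousLinearMap.adjoint J = J)
    (hJ2 : J.comp J = 1) (T : H →L[ℂ] H) (l : ℝ) (hl : 0 < l)
    (h : IsSpectralPointOfPositiveType J
      (T.comp (J.comp ((ContinuousLinearMap.adjoint T).comp J))) l) :
    IsSpectralPointOfPositiveType J
      ((J.comp ((ContinuousLinearMap.adjoint T).comp J)).comp T) l := by
  exact stmt17_main J hJsa hJ2 T l hl h
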